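/- Let d ≥ 1, m ≥ 1, τ > d, and let β ∈ ℝ^m satisfy β_i ≠ 0 for all i and |β_i| ≠ |β_j| for all i ≠ j. Then there exists γ > 0 such that the set of ω ∈ [1,2]^d satisfying, for every k ∈ ℤ^d \ {0}, every i ∈ {1,…,m}, and every pair i ≠ j: (0) |k·ω| ≥ γ ‖k‖₁^{−τ}; (1) |k·ω − β_i| ≥ γ ‖k‖₁^{−τ}; (2) |k·ω − β_i + β_j| ≥ γ ‖k‖₁^{−τ} and |k·ω − β_i − β_j| ≥ γ ‖k‖₁^{−τ}; has positive d-dimensional Lebesgue measure. -/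

import Mathlib

open scoped BigOperators

open MeasureTheory Set
open scoped ENNReal


lemma vol_slab_1d (a b ε : ℝ) (ha : a ≠ 0) :
    volume {x : ℝ | |a * x - b| < ε} ≤ ENNReal.ofReal (2 * ε / |a|) := by
  rcases le_or_gt ε 0 with hε | hε
  · have h : {x : ℝ | |a * x - b| < ε} = ∅ := by
      ext x
      simp only [mem_setOf_eq, mem_empty_iff_false, iff_false, not_lt]
      exact hε.trans (abs_nonneg _)
    simp [h]
  · rcases lt_or_gt_of_ne ha with hneg | hpos
    · have h : {x : ℝ | |a * x - b| < ε} = Ioo ((b + ε) / a) ((b - ε) / a) := by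
        ext x
        rw [mem_setOf_eq, abs_sub_lt_iff, mem_Ioo, div_lt_iff_of_neg hneg,
          lt_div_iff_of_neg hneg]
        constructor <;> rintro ⟨h1, h2⟩ <;> constructor <;> nlinarith
      rw [h, Real.volume_Ioo]
      apply ENNReal.ofReal_le_ofReal
      rw [abs_of_neg hneg, div_sub_div_same]
      rw [show b - ε - (b + ε) = -(2 * ε) by ring, neg_div, ← div_neg]
    · have h : {x : ℝ | |a * x - b| < ε} = Ioo ((b - ε) / a) ((b + ε) / a) := by
        ext x
        rw [mem_setOf_eq, abs_sub_lt_iff, mem_Ioo, div_lt_iff₀ hpos, lt_div_iff₀ hpos]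
        constructor <;> rintro ⟨h1, h2⟩ <;> constructor <;> linarith
      rw [h, Real.volume_Ioo]
      apply ENNReal.ofReal_le_ofReal
      rw [abs_of_pos hpos, div_sub_div_same]
      rw [show b + ε - (b - ε) = 2 * ε by ring]

lemma vol_slab {d : ℕ} (k : Fin d → ℝ) (i₀ : Fin d) (ha : k i₀ ≠ 0) (c ε : ℝ) :
    volume {ω : Fin d → ℝ | (∀ i, ω i ∈ Icc (1 : ℝ) 2) ∧ |(∑ i, k i * ω i) - c| < ε}
      ≤ ENNReal.ofReal (2 * ε / |k i₀|) := by
  have hd : d ≠ 0 := by rintro rfl; exact i₀.elim0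
  rcases Nat.exists_eq_succ_of_ne_zero hd with ⟨n, rfl⟩
  set B : Set (Fin n → ℝ) := Set.pi Set.univ (fun _ => Icc (1 : ℝ) 2) with hB
  set T : Set (ℝ × (Fin n → ℝ)) :=
    {p | (p.1 ∈ Icc (1 : ℝ) 2 ∧ p.2 ∈ B) ∧
      |k i₀ * p.1 + (∑ j, k (i₀.succAbove j) * p.2 j) - c| < ε} with hT
  have hBm : MeasurableSet B := MeasurableSet.univ_pi fun _ => measurableSet_Icc
  have hTm : MeasurableSet T := by
    have h1 : MeasurableSet {p : ℝ × (Fin n → ℝ) | p.1 ∈ Icc (1:ℝ) 2 ∧ p.2 ∈ B} :=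
      (measurableSet_Icc.preimage measurable_fst).inter (hBm.preimage measurable_snd)
    have hmf : Measurable fun p : ℝ × (Fin n → ℝ) =>
        |k i₀ * p.1 + (∑ j, k (i₀.succAbove j) * p.2 j) - c| := by
      apply Measurable.abs
      apply Measurable.sub _ measurable_const
      apply Measurable.add
      · exact measurable_fst.const_mul _
      · exact Finset.measurable_sum _ fun j _ => (measurable_pi_apply j).comp measurable_snd |>.const_mul _
    exact h1.inter (measurableSet_lt hmf measurable_const)
  have hS : {ω : Fin (n+1) → ℝ | (∀ i, ω i ∈ Icc (1 : ℝ) 2) ∧ |(∑ i, k i * ω i) - c| < ε}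
      = (MeasurableEquiv.piFinSuccAbove (fun _ => ℝ) i₀) ⁻¹' T := by
    ext ω
    simp only [mem_setOf_eq, mem_preimage, hT, MeasurableEquiv.piFinSuccAbove_apply, hB,
      Fin.insertNthEquiv_symm_apply]
    rw [Fin.forall_iff_succAbove i₀, Fin.sum_univ_succAbove (fun i => k i * ω i) i₀]
    simp only [Set.mem_pi, Set.mem_univ, forall_true_left, Fin.removeNth, Set.mem_Icc,
      Pi.le_def, true_implies]
  rw [hS, ((volume_preserving_piFinSuccAbove (fun _ : Fin (n+1) => ℝ) i₀).measure_preimage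
    hTm.nullMeasurableSet)]
  rw [Measure.volume_eq_prod, Measure.prod_apply_symm hTm]
  have hslice : ∀ y : Fin n → ℝ, volume ((fun x => (x, y)) ⁻¹' T)
      ≤ B.indicator (fun _ => ENNReal.ofReal (2 * ε / |k i₀|)) y := by
    intro y
    by_cases hy : y ∈ B
    · rw [Set.indicator_of_mem hy]
      refine (measure_mono ?_).trans
        (vol_slab_1d (k i₀) (c - ∑ j, k (i₀.succAbove j) * y j) ε ha)
      intro x hx
      simp only [mem_preimage, hT, mem_setOf_eq] at hx
      simp only [mem_setOf_eq]
      have := hx.2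
      rw [show k i₀ * x - (c - ∑ j, k (i₀.succAbove j) * y j)
        = k i₀ * x + (∑ j, k (i₀.succAbove j) * y j) - c by ring]
      exact this
    · have h0 : (fun x => (x, y)) ⁻¹' T = ∅ := by
        ext x
        simp only [mem_preimage, hT, mem_setOf_eq, mem_empty_iff_false, iff_false]
        rintro ⟨⟨-, h⟩, -⟩
        exact hy h
      rw [h0, Set.indicator_of_notMem hy]
      simp
  calc ∫⁻ y, volume ((fun x => (x, y)) ⁻¹' T)
      ≤ ∫⁻ y, B.indicator (fun _ => ENNReal.ofReal (2 * ε / |k i₀|)) y := lintegral_mono hslice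
    _ = ENNReal.ofReal (2 * ε / |k i₀|) * volume B := lintegral_indicator_const hBm _
    _ = ENNReal.ofReal (2 * ε / |k i₀|) := by
        rw [hB, volume_pi_pi]
        simp [Real.volume_Icc]
        norm_num

lemma tsum_pi_prod {d : ℕ} (g : ℤ → ℝ≥0∞) :
    ∑' k : Fin d → ℤ, ∏ i, g (k i) = (∑' n : ℤ, g n) ^ d := by
  induction d with
  | zero => simp [tsum_fintype]
  | succ n ih =>
    rw [← (Fin.consEquiv fun _ : Fin (n+1) => ℤ).tsum_eq fun k : Fin (n+1) → ℤ => ∏ i, g (k i)]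
    have h : ∀ p : ℤ × (Fin n → ℤ),
        (∏ i, g (((Fin.consEquiv fun _ : Fin (n+1) => ℤ) p) i)) = g p.1 * ∏ j, g (p.2 j) := by
      rintro ⟨a, y⟩
      rw [Fin.prod_univ_succ]
      simp [Fin.consEquiv]
    rw [tsum_congr h, ENNReal.tsum_prod (f := fun a (y : Fin n → ℤ) => g a * ∏ j, g (y j))]
    simp_rw [ENNReal.tsum_mul_left, ENNReal.tsum_mul_right]
    rw [ih, pow_succ, mul_comm]

lemma int_tsum_lt_top {r : ℝ} (hr : 1 < r) :
    ∑' n : ℤ, ENNReal.ofReal ((1 + |(n : ℝ)|) ^ (-r)) < ⊤ := by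
  have hg : Summable (fun n : ℤ => |(n : ℝ)| ^ (-r)) := Real.summable_abs_int_rpow hr
  have hh : Summable (fun n : ℤ => if n = 0 then (1 : ℝ) else 0) := by
    apply summable_of_ne_finset_zero (s := {0})
    intro n hn
    simp only [Finset.mem_singleton] at hn
    simp [hn]
  have hsum : Summable (fun n : ℤ => (1 + |(n : ℝ)|) ^ (-r)) := by
    refine Summable.of_norm_bounded
      (g := fun n : ℤ => |(n : ℝ)| ^ (-r) + if n = 0 then (1 : ℝ) else 0) (hg.add hh) ?_
    intro n
    rw [Real.norm_eq_abs, abs_of_nonneg (Real.rpow_nonneg (by positivity) _)]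
    by_cases hn : n = 0
    · subst hn
      simp only [Int.cast_zero, abs_zero, add_zero, Real.one_rpow, if_true, ite_true]
      have h0 : (0:ℝ) ≤ (0:ℝ) ^ (-r) := Real.rpow_nonneg le_rfl _
      norm_num
      linarith
    · have h1 : (0 : ℝ) < |(n : ℝ)| := by
        simp only [abs_pos, ne_eq, Int.cast_eq_zero]; exact hn
      have := Real.rpow_le_rpow_of_nonpos h1 (by linarith [abs_nonneg ((n:ℝ))] : |(n:ℝ)| ≤ 1 + |(n:ℝ)|)
        (by linarith : -r ≤ 0)
      simp [hn]
      linarith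
  rw [← ENNReal.ofReal_tsum_of_nonneg (fun n => Real.rpow_nonneg (by positivity) _) hsum]
  exact ENNReal.ofReal_lt_top

lemma norm_sum_rpow_le {d : ℕ} (hd : 1 ≤ d) (s : ℝ) (hs : 0 < s) (k : Fin d → ℤ) (hk : k ≠ 0) :
    ENNReal.ofReal ((∑ i, |(k i : ℝ)|) ^ (-s))
      ≤ ENNReal.ofReal ((2 : ℝ) ^ s) * ∏ i, ENNReal.ofReal ((1 + |(k i : ℝ)|) ^ (-(s / d))) := by
  set N : ℝ := ∑ i, |(k i : ℝ)| with hN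
  have hj : ∃ j, k j ≠ 0 := by
    by_contra h
    push_neg at h
    exact hk (funext fun i => h i)
  obtain ⟨j, hj⟩ := hj
  have hN1 : (1 : ℝ) ≤ N := by
    have h1 : (1 : ℝ) ≤ |(k j : ℝ)| := by
      have h2 : (1 : ℤ) ≤ |k j| := Int.one_le_abs hj
      exact_mod_cast h2
    have h2 : |(k j : ℝ)| ≤ N := by
      rw [hN]
      exact Finset.single_le_sum (f := fun i => |(k i : ℝ)|) (fun i _ => abs_nonneg _)
        (Finset.mem_univ j)
    linarith
  have hNpos : (0 : ℝ) < N := by linarith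
  -- product bound
  have hprod : (∏ i, (1 + |(k i : ℝ)|)) ≤ (2 * N) ^ d := by
    calc (∏ i, (1 + |(k i : ℝ)|)) ≤ ∏ _i : Fin d, (2 * N) := by
          apply Finset.prod_le_prod (fun i _ => by positivity)
          intro i _
          have : |(k i : ℝ)| ≤ N := Finset.single_le_sum (fun i _ => abs_nonneg ((k i : ℝ))) (Finset.mem_univ i)
          linarith
      _ = (2 * N) ^ d := by rw [Finset.prod_const, Finset.card_univ, Fintype.card_fin]
  have hprodpos : (0 : ℝ) < ∏ i, (1 + |(k i : ℝ)|) :=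
    Finset.prod_pos fun i _ => by positivity
  have key : N ^ (-s) ≤ (2 : ℝ) ^ s * ∏ i, (1 + |(k i : ℝ)|) ^ (-(s / d)) := by
    have h2N : (0 : ℝ) < 2 * N := by linarith
    have hstep : ((2 * N) ^ d : ℝ) ^ (-(s / d)) ≤ (∏ i, (1 + |(k i : ℝ)|)) ^ (-(s / d)) :=
      Real.rpow_le_rpow_of_nonpos hprodpos hprod (neg_nonpos.mpr (div_nonneg hs.le (Nat.cast_nonneg d)))
    have heq : ((2 * N) ^ d : ℝ) ^ (-(s / d)) = (2 * N) ^ (-s) := by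
      rw [← Real.rpow_natCast (2 * N) d, ← Real.rpow_mul h2N.le]
      congr 1
      have hd0 : (d : ℝ) ≠ 0 := Nat.cast_ne_zero.mpr (by omega)
      field_simp
    have heq2 : (∏ i, (1 + |(k i : ℝ)|)) ^ (-(s / d)) = ∏ i, (1 + |(k i : ℝ)|) ^ (-(s / d)) := by
      rw [← Real.finset_prod_rpow _ _ (fun i _ => by positivity)]
    have heq3 : (2 * N : ℝ) ^ (-s) = (2:ℝ) ^ (-s) * N ^ (-s) :=
      Real.mul_rpow (by norm_num) hNpos.le
    have h2s : (0:ℝ) < (2:ℝ) ^ s := Real.rpow_pos_of_pos (by norm_num) s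
    have h2s' : (2:ℝ) ^ (-s) * (2:ℝ) ^ s = 1 := by
      rw [← Real.rpow_add (by norm_num)]; simp
    calc N ^ (-s) = (2:ℝ)^s * ((2:ℝ)^(-s) * N ^ (-s)) := by
          rw [← mul_assoc, mul_comm ((2:ℝ)^s), h2s']; ring
      _ = (2:ℝ)^s * (2*N) ^ (-s) := by rw [heq3]
      _ ≤ (2:ℝ)^s * (∏ i, (1 + |(k i : ℝ)|)) ^ (-(s / d)) := by
          rw [← heq]
          exact mul_le_mul_of_nonneg_left hstep h2s.le
      _ = (2:ℝ)^s * ∏ i, (1 + |(k i : ℝ)|) ^ (-(s / d)) := by rw [heq2]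
  calc ENNReal.ofReal (N ^ (-s))
      ≤ ENNReal.ofReal ((2:ℝ)^s * ∏ i, (1 + |(k i : ℝ)|) ^ (-(s / d))) :=
        ENNReal.ofReal_le_ofReal key
    _ = ENNReal.ofReal ((2:ℝ)^s) * ENNReal.ofReal (∏ i, (1 + |(k i : ℝ)|) ^ (-(s / d))) := by
        rw [ENNReal.ofReal_mul (by positivity)]
    _ = ENNReal.ofReal ((2:ℝ)^s) * ∏ i, ENNReal.ofReal ((1 + |(k i : ℝ)|) ^ (-(s / d))) := by
        rw [ENNReal.ofReal_prod_of_nonneg (fun i _ => by positivity)]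

/-- Genericity of the Diophantine–Melnikov conditions: for fixed normal
frequencies `β` with pairwise distinct nonzero moduli and `τ > d`, there is a
`γ > 0` for which the set of internal frequencies `ω ∈ [1,2]^d` satisfying the
Diophantine condition and the first and second Melnikov conditions of type
`(γ, τ)` has positive Lebesgue measure. -/
theorem diophantine_melnikov_positive_measure (d m : ℕ) (hd : 1 ≤ d) (hm : 1 ≤ m)
    (τ : ℝ) (hτ : (d : ℝ) < τ) (β : Fin m → ℝ)
    (hβ : ∀ i, β i ≠ 0) (hβ' : ∀ i j : Fin m, i ≠ j → |β i| ≠ |β j|) :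
    ∃ γ : ℝ, 0 < γ ∧
      0 < MeasureTheory.volume {ω : Fin d → ℝ |
        (∀ i, ω i ∈ Set.Icc (1 : ℝ) 2) ∧
        ∀ k : Fin d → ℤ, k ≠ 0 →
          (γ * (∑ i, |(k i : ℝ)|) ^ (-τ) ≤ |∑ i, (k i : ℝ) * ω i|) ∧
          (∀ i : Fin m,
            γ * (∑ i, |(k i : ℝ)|) ^ (-τ) ≤ |(∑ i, (k i : ℝ) * ω i) - β i|) ∧
          (∀ i j : Fin m, i ≠ j →
            γ * (∑ i, |(k i : ℝ)|) ^ (-τ) ≤ |(∑ i, (k i : ℝ) * ω i) - β i + β j| ∧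
            γ * (∑ i, |(k i : ℝ)|) ^ (-τ) ≤ |(∑ i, (k i : ℝ) * ω i) - β i - β j|)} := by
  classical
  set s : ℝ := τ + 1 with hs
  have hs1 : (1 : ℝ) < s / d := by
    rw [lt_div_iff₀ (by exact_mod_cast Nat.lt_of_lt_of_le Nat.zero_lt_one hd : (0:ℝ) < d)]
    linarith
  have hspos : (0 : ℝ) < s := by
    have : (0:ℝ) ≤ d := Nat.cast_nonneg d
    linarith
  -- the finite set of shifts
  set F : Finset ℝ := insert (0 : ℝ)
    ((Finset.univ.image β) ∪
     (Finset.univ.image fun p : Fin m × Fin m => β p.1 - β p.2) ∪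
     (Finset.univ.image fun p : Fin m × Fin m => β p.1 + β p.2)) with hF
  -- the weight
  set N : (Fin d → ℤ) → ℝ := fun k => ∑ i, |(k i : ℝ)| with hNdef
  set w : (Fin d → ℤ) → ℝ≥0∞ := fun k => if k = 0 then 0 else ENNReal.ofReal (N k ^ (-s))
    with hw
  -- total weight is finite
  have hS : ∑' k : Fin d → ℤ, w k < ⊤ := by
    have hle : ∀ k : Fin d → ℤ, w k ≤
        ENNReal.ofReal ((2:ℝ) ^ s) * ∏ i, ENNReal.ofReal ((1 + |(k i : ℝ)|) ^ (-(s / d))) := by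
      intro k
      by_cases hk : k = 0
      · simp [hw, hk]
      · simp only [hw, if_neg hk]
        exact norm_sum_rpow_le hd s hspos k hk
    calc ∑' k : Fin d → ℤ, w k
        ≤ ∑' k : Fin d → ℤ, ENNReal.ofReal ((2:ℝ) ^ s) *
            ∏ i, ENNReal.ofReal ((1 + |(k i : ℝ)|) ^ (-(s / d))) := ENNReal.tsum_le_tsum hle
      _ = ENNReal.ofReal ((2:ℝ) ^ s) *
            ∑' k : Fin d → ℤ, ∏ i, ENNReal.ofReal ((1 + |(k i : ℝ)|) ^ (-(s / d))) :=
          ENNReal.tsum_mul_left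
      _ = ENNReal.ofReal ((2:ℝ) ^ s) *
            (∑' n : ℤ, ENNReal.ofReal ((1 + |(n : ℝ)|) ^ (-(s / d)))) ^ d := by
          rw [tsum_pi_prod (fun n : ℤ => ENNReal.ofReal ((1 + |(n : ℝ)|) ^ (-(s / d))))]
      _ < ⊤ := by
          apply ENNReal.mul_lt_top ENNReal.ofReal_lt_top
          exact ENNReal.pow_lt_top (int_tsum_lt_top hs1)
  -- the constant
  set T : ℝ≥0∞ := (F.card : ℝ≥0∞) * ENNReal.ofReal (2 * d) * ∑' k : Fin d → ℤ, w k with hT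
  have hTlt : T < ⊤ := by
    apply ENNReal.mul_lt_top _ hS
    exact ENNReal.mul_lt_top (by simp) ENNReal.ofReal_lt_top
  set γ : ℝ := (T.toReal + 1)⁻¹ with hγ
  have hγpos : 0 < γ := by
    apply inv_pos.mpr
    have := ENNReal.toReal_nonneg (a := T)
    linarith
  refine ⟨γ, hγpos, ?_⟩
  -- bad sets
  set slab : (Fin d → ℤ) → ℝ → Set (Fin d → ℝ) := fun k c =>
    {ω : Fin d → ℝ | (∀ i, ω i ∈ Icc (1 : ℝ) 2) ∧
      |(∑ i, (k i : ℝ) * ω i) - c| < γ * N k ^ (-τ)} with hslab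
  set Bad : Set (Fin d → ℝ) := ⋃ (k : Fin d → ℤ) (_ : k ≠ 0) (c ∈ F), slab k c with hBad
  set Box : Set (Fin d → ℝ) := Set.pi Set.univ (fun _ => Icc (1 : ℝ) 2) with hBox
  -- facts about N
  have hN1 : ∀ k : Fin d → ℤ, k ≠ 0 → 1 ≤ N k := by
    intro k hk
    obtain ⟨j, hj⟩ : ∃ j, k j ≠ 0 := by
      by_contra h; push_neg at h; exact hk (funext fun i => h i)
    have h1 : (1 : ℝ) ≤ |(k j : ℝ)| := by exact_mod_cast Int.one_le_abs hj
    have h2 : |(k j : ℝ)| ≤ N k :=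
      Finset.single_le_sum (f := fun i => |(k i : ℝ)|) (fun i _ => abs_nonneg _)
        (Finset.mem_univ j)
    linarith
  -- measure of each slab
  have hslabvol : ∀ (k : Fin d → ℤ), k ≠ 0 → ∀ c : ℝ,
      volume (slab k c) ≤ ENNReal.ofReal (2 * d * γ) * w k := by
    intro k hk c
    have : Nonempty (Fin d) := ⟨⟨0, by omega⟩⟩
    obtain ⟨i₀, hi₀⟩ := Finite.exists_max fun i => |(k i : ℝ)|
    have hki₀ : (k i₀ : ℝ) ≠ 0 := by
      obtain ⟨j, hj⟩ : ∃ j, k j ≠ 0 := by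
        by_contra h; push_neg at h; exact hk (funext fun i => h i)
      have h1 : (1 : ℝ) ≤ |(k j : ℝ)| := by exact_mod_cast Int.one_le_abs hj
      have := hi₀ j
      intro h0
      rw [h0, abs_zero] at this
      linarith
    have hNd : N k ≤ d * |(k i₀ : ℝ)| := by
      calc N k = ∑ i, |(k i : ℝ)| := rfl
        _ ≤ ∑ _i : Fin d, |(k i₀ : ℝ)| := Finset.sum_le_sum fun i _ => hi₀ i
        _ = d * |(k i₀ : ℝ)| := by
            rw [Finset.sum_const, Finset.card_univ, Fintype.card_fin, nsmul_eq_mul]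
    have hNk1 := hN1 k hk
    have hNkpos : (0:ℝ) < N k := by linarith
    have habs : (0:ℝ) < |(k i₀ : ℝ)| := abs_pos.mpr hki₀
    have hbound : 2 * (γ * N k ^ (-τ)) / |(k i₀ : ℝ)| ≤ 2 * d * γ * N k ^ (-s) := by
      have hsns : (0:ℝ) ≤ N k ^ (-s) := Real.rpow_nonneg hNkpos.le _
      have hrpow : N k ^ (-τ) = N k ^ (-s) * N k := by
        rw [hs, show -τ = -(τ + 1) + 1 by ring, Real.rpow_add hNkpos, Real.rpow_one]
      rw [div_le_iff₀ habs, hrpow]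
      nlinarith [mul_le_mul_of_nonneg_left hNd
        (mul_nonneg (mul_nonneg (by norm_num : (0:ℝ) ≤ 2) hγpos.le) hsns)]
    calc volume (slab k c)
        ≤ ENNReal.ofReal (2 * (γ * N k ^ (-τ)) / |(k i₀ : ℝ)|) :=
          vol_slab (fun i => (k i : ℝ)) i₀ hki₀ c (γ * N k ^ (-τ))
      _ ≤ ENNReal.ofReal (2 * d * γ * N k ^ (-s)) := ENNReal.ofReal_le_ofReal hbound
      _ = ENNReal.ofReal (2 * d * γ) * w k := by
          rw [hw]
          simp only [if_neg hk]
          rw [← ENNReal.ofReal_mul (by positivity)]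
  -- measure of Bad
  have hBadvol : volume Bad ≤ ENNReal.ofReal γ * T := by
    have h1 : volume Bad ≤ ∑' k : Fin d → ℤ,
        (F.card : ℝ≥0∞) * (ENNReal.ofReal (2 * d * γ) * w k) := by
      refine (measure_iUnion_le _).trans (ENNReal.tsum_le_tsum fun k => ?_)
      by_cases hk : k = 0
      · simp [hk]
      · refine le_trans (measure_mono (Set.iUnion_subset fun _ => le_refl _)) ?_
        refine (measure_biUnion_finset_le F _).trans ?_
        calc ∑ c ∈ F, volume (slab k c)
            ≤ ∑ _c ∈ F, ENNReal.ofReal (2 * d * γ) * w k :=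
              Finset.sum_le_sum fun c _ => hslabvol k hk c
          _ = (F.card : ℝ≥0∞) * (ENNReal.ofReal (2 * d * γ) * w k) := by
              rw [Finset.sum_const, nsmul_eq_mul]
    calc volume Bad ≤ ∑' k : Fin d → ℤ,
          (F.card : ℝ≥0∞) * (ENNReal.ofReal (2 * d * γ) * w k) := h1
      _ = (F.card : ℝ≥0∞) * ENNReal.ofReal (2 * d * γ) * ∑' k, w k := by
          rw [← ENNReal.tsum_mul_left]
          congr 1
          ext k
          ring
      _ = ENNReal.ofReal γ * T := by
          rw [hT, show (2 * (d:ℝ) * γ) = γ * (2 * d) by ring, ENNReal.ofReal_mul hγpos.le]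
          ring
  have hBadlt : volume Bad < 1 := by
    calc volume Bad ≤ ENNReal.ofReal γ * T := hBadvol
      _ ≤ ENNReal.ofReal γ * ENNReal.ofReal T.toReal := by
          rw [ENNReal.ofReal_toReal hTlt.ne]
      _ = ENNReal.ofReal (γ * T.toReal) := (ENNReal.ofReal_mul hγpos.le).symm
      _ < 1 := by
          rw [← ENNReal.ofReal_one]
          apply ENNReal.ofReal_lt_ofReal_iff (by norm_num) |>.mpr
          rw [hγ]
          rw [inv_mul_eq_div, div_lt_one (by positivity)]
          have := ENNReal.toReal_nonneg (a := T)
          linarith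
  -- the good set contains Box \ Bad
  have hsub : Box \ Bad ⊆ {ω : Fin d → ℝ |
        (∀ i, ω i ∈ Set.Icc (1 : ℝ) 2) ∧
        ∀ k : Fin d → ℤ, k ≠ 0 →
          (γ * (∑ i, |(k i : ℝ)|) ^ (-τ) ≤ |∑ i, (k i : ℝ) * ω i|) ∧
          (∀ i : Fin m,
            γ * (∑ i, |(k i : ℝ)|) ^ (-τ) ≤ |(∑ i, (k i : ℝ) * ω i) - β i|) ∧
          (∀ i j : Fin m, i ≠ j →
            γ * (∑ i, |(k i : ℝ)|) ^ (-τ) ≤ |(∑ i, (k i : ℝ) * ω i) - β i + β j| ∧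
            γ * (∑ i, |(k i : ℝ)|) ^ (-τ) ≤ |(∑ i, (k i : ℝ) * ω i) - β i - β j|)} := by
    rintro ω ⟨hωBox, hωBad⟩
    have hbox : ∀ i, ω i ∈ Icc (1:ℝ) 2 := fun i => hωBox i (Set.mem_univ i)
    have hgood : ∀ k : Fin d → ℤ, k ≠ 0 → ∀ c ∈ F,
        γ * N k ^ (-τ) ≤ |(∑ i, (k i : ℝ) * ω i) - c| := by
      intro k hk c hc
      by_contra hlt
      push_neg at hlt
      apply hωBad
      rw [hBad]
      exact Set.mem_iUnion.mpr ⟨k, Set.mem_iUnion.mpr ⟨hk, Set.mem_iUnion.mpr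
        ⟨c, Set.mem_iUnion.mpr ⟨hc, ⟨hbox, hlt⟩⟩⟩⟩⟩
    refine ⟨hbox, fun k hk => ?_⟩
    have h0 : (0:ℝ) ∈ F := Finset.mem_insert_self _ _
    have hβmem : ∀ i : Fin m, β i ∈ F := fun i =>
      Finset.mem_insert_of_mem (Finset.mem_union_left _ (Finset.mem_union_left _
        (Finset.mem_image_of_mem β (Finset.mem_univ i))))
    have hβsub : ∀ i j : Fin m, β i - β j ∈ F := fun i j =>
      Finset.mem_insert_of_mem (Finset.mem_union_left _ (Finset.mem_union_right _
        (Finset.mem_image_of_mem _ (Finset.mem_univ (i, j)))))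
    have hβadd : ∀ i j : Fin m, β i + β j ∈ F := fun i j =>
      Finset.mem_insert_of_mem (Finset.mem_union_right _
        (Finset.mem_image_of_mem _ (Finset.mem_univ (i, j))))
    refine ⟨?_, fun i => ?_, fun i j hij => ⟨?_, ?_⟩⟩
    · have := hgood k hk 0 h0
      simpa using this
    · exact hgood k hk (β i) (hβmem i)
    · have := hgood k hk (β i - β j) (hβsub i j)
      rw [show (∑ i, (k i : ℝ) * ω i) - (β i - β j)
        = (∑ i, (k i : ℝ) * ω i) - β i + β j by ring] at this
      exact this
    · have := hgood k hk (β i + β j) (hβadd i j)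
      rw [show (∑ i, (k i : ℝ) * ω i) - (β i + β j)
        = (∑ i, (k i : ℝ) * ω i) - β i - β j by ring] at this
      exact this
  -- Box has volume 1
  have hBoxvol : volume Box = 1 := by
    rw [hBox, volume_pi_pi]
    simp [Real.volume_Icc]
    norm_num
  -- conclude
  have hchain : (1 : ℝ≥0∞) ≤ volume (Box \ Bad) + volume Bad := by
    rw [← hBoxvol]
    refine le_trans (measure_mono ?_) (measure_union_le (Box \ Bad) Bad)
    intro x hx
    by_cases h : x ∈ Bad
    · exact Set.mem_union_right _ h
    · exact Set.mem_union_left _ ⟨hx, h⟩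
  have hpos : 0 < volume (Box \ Bad) := by
    rcases eq_or_ne (volume (Box \ Bad)) 0 with h | h
    · rw [h, zero_add] at hchain
      exact absurd (lt_of_lt_of_le hBadlt hchain) (lt_irrefl _)
    · exact pos_iff_ne_zero.mpr h
  exact lt_of_lt_of_le hpos (measure_mono hsub)
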